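/- Let Q be a probability measure on a finite product of measurable spaces Ω₁ × ... × Ω_m with marginals Q_i on Ω_i, and let P = Q₁ ⊗ ... ⊗ Q_m be the corresponding product measure. Suppose h is a measurable function on the product space with |h| ≤ K, and suppose that for each i, the total-variation-type mixing coefficient between the first i coordinates and the (i+1)-st coordinate under Q is at most β. Then |E_Q[h] - E_P[h]| ≤ 2(m-1)Kβ. -/

import Mathlib

open MeasureTheory ProbabilityTheory
open scoped ENNReal symmDiff

universe u

section TV
variable {β : Type*} [MeasurableSpace β]

/-- Total variation-type distance between two measures. -/
noncomputable def tvDist (μ ν : Measure β) : ℝ :=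
  ⨆ (A : Set β) (_ : MeasurableSet A), |(μ A).toReal - (ν A).toReal|

lemma tv_inner_le_one (μ ν : Measure β) [IsProbabilityMeasure μ] [IsProbabilityMeasure ν]
    (A : Set β) : (⨆ (_ : MeasurableSet A), |(μ A).toReal - (ν A).toReal|) ≤ 1 := by
  refine Real.iSup_le (fun _ => ?_) zero_le_one
  have h1 : (μ A).toReal ≤ 1 := by
    simpa using ENNReal.toReal_mono (by simp) (prob_le_one (μ := μ) (s := A))
  have h2 : (ν A).toReal ≤ 1 := by
    simpa using ENNReal.toReal_mono (by simp) (prob_le_one (μ := ν) (s := A))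
  have h3 : 0 ≤ (μ A).toReal := ENNReal.toReal_nonneg
  have h4 : 0 ≤ (ν A).toReal := ENNReal.toReal_nonneg
  rw [abs_sub_le_iff]; constructor <;> linarith

lemma tvDist_nonneg (μ ν : Measure β) : 0 ≤ tvDist μ ν :=
  Real.iSup_nonneg fun _ => Real.iSup_nonneg fun _ => abs_nonneg _

lemma tvDist_le_one (μ ν : Measure β) [IsProbabilityMeasure μ] [IsProbabilityMeasure ν] :
    tvDist μ ν ≤ 1 :=
  Real.iSup_le (fun A => tv_inner_le_one μ ν A) zero_le_one

lemma abs_sub_le_tvDist (μ ν : Measure β) [IsProbabilityMeasure μ] [IsProbabilityMeasure ν]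
    {A : Set β} (hA : MeasurableSet A) :
    |(μ A).toReal - (ν A).toReal| ≤ tvDist μ ν := by
  have hb : BddAbove (Set.range fun A : Set β =>
      ⨆ (_ : MeasurableSet A), |(μ A).toReal - (ν A).toReal|) := by
    refine ⟨1, ?_⟩
    rintro x ⟨B, rfl⟩
    exact tv_inner_le_one μ ν B
  have h := le_ciSup hb A
  rwa [ciSup_pos hA] at h

end TV

section B
variable {β : Type*} [MeasurableSpace β]

lemma abs_integral_sub_le_tvDist (μ ν : Measure β)
    [IsProbabilityMeasure μ] [IsProbabilityMeasure ν] {f : β → ℝ} (hf : Measurable f)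
    {K : ℝ} (hK : 0 ≤ K) (hbd : ∀ x, |f x| ≤ K) :
    |∫ x, f x ∂μ - ∫ x, f x ∂ν| ≤ 2 * K * tvDist μ ν := by
  set ρ : Measure β := μ + ν with hρ
  have hμρ : μ ≪ ρ := Measure.absolutelyContinuous_of_le (Measure.le_add_right le_rfl)
  have hνρ : ν ≪ ρ := Measure.absolutelyContinuous_of_le (Measure.le_add_left le_rfl)
  set g₁ : β → ℝ := fun x => (μ.rnDeriv ρ x).toReal with hg₁
  set g₂ : β → ℝ := fun x => (ν.rnDeriv ρ x).toReal with hg₂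
  have mg₁ : Measurable g₁ := (Measure.measurable_rnDeriv μ ρ).ennreal_toReal
  have mg₂ : Measurable g₂ := (Measure.measurable_rnDeriv ν ρ).ennreal_toReal
  have ig₁ : Integrable g₁ ρ := Measure.integrable_toReal_rnDeriv
  have ig₂ : Integrable g₂ ρ := Measure.integrable_toReal_rnDeriv
  have e₁ : ∫ x, f x ∂μ = ∫ x, g₁ x * f x ∂ρ := by
    rw [← MeasureTheory.integral_rnDeriv_smul hμρ]; simp [hg₁, smul_eq_mul]
  have e₂ : ∫ x, f x ∂ν = ∫ x, g₂ x * f x ∂ρ := by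
    rw [← MeasureTheory.integral_rnDeriv_smul hνρ]; simp [hg₂, smul_eq_mul]
  have ifg₁ : Integrable (fun x => g₁ x * f x) ρ :=
    Integrable.bdd_mul (c := K) ig₁ hf.aestronglyMeasurable
      (Filter.Eventually.of_forall fun x => by simpa using hbd x) |>.congr
      (Filter.Eventually.of_forall fun x => by ring)
  have ifg₂ : Integrable (fun x => g₂ x * f x) ρ :=
    Integrable.bdd_mul (c := K) ig₂ hf.aestronglyMeasurable
      (Filter.Eventually.of_forall fun x => by simpa using hbd x) |>.congr
      (Filter.Eventually.of_forall fun x => by ring)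
  rw [e₁, e₂, ← integral_sub ifg₁ ifg₂]
  have key : ∫ x, |g₁ x - g₂ x| ∂ρ ≤ 2 * tvDist μ ν := by
    set B : Set β := {x | g₂ x ≤ g₁ x} with hB
    have mB : MeasurableSet B := measurableSet_le mg₂ mg₁
    have isub : Integrable (fun x => g₁ x - g₂ x) ρ := ig₁.sub ig₂
    have habs : Integrable (fun x => |g₁ x - g₂ x|) ρ := isub.abs
    rw [← integral_add_compl mB habs]
    have eB : ∫ x in B, |g₁ x - g₂ x| ∂ρ = (μ B).toReal - (ν B).toReal := by
      rw [setIntegral_congr_fun mB (g := fun x => g₁ x - g₂ x)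
        (fun x hx => abs_of_nonneg (sub_nonneg.2 hx)),
        integral_sub ig₁.integrableOn ig₂.integrableOn,
        Measure.setIntegral_toReal_rnDeriv hμρ B, Measure.setIntegral_toReal_rnDeriv hνρ B]
      rfl
    have eBc : ∫ x in Bᶜ, |g₁ x - g₂ x| ∂ρ = (ν Bᶜ).toReal - (μ Bᶜ).toReal := by
      rw [setIntegral_congr_fun mB.compl (g := fun x => g₂ x - g₁ x)
        (fun x hx => by
          rw [abs_sub_comm]
          exact abs_of_nonneg (sub_nonneg.2 (le_of_not_ge hx))),
        integral_sub ig₂.integrableOn ig₁.integrableOn,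
        Measure.setIntegral_toReal_rnDeriv hνρ Bᶜ, Measure.setIntegral_toReal_rnDeriv hμρ Bᶜ]
      rfl
    rw [eB, eBc]
    have h1 : (μ B).toReal - (ν B).toReal ≤ tvDist μ ν :=
      (le_abs_self _).trans (abs_sub_le_tvDist μ ν mB)
    have h2 : (ν Bᶜ).toReal - (μ Bᶜ).toReal ≤ tvDist μ ν := by
      refine (le_abs_self _).trans ?_
      rw [abs_sub_comm]
      exact abs_sub_le_tvDist μ ν mB.compl
    linarith
  calc |∫ x, (g₁ x * f x - g₂ x * f x) ∂ρ| ≤ ∫ x, |g₁ x * f x - g₂ x * f x| ∂ρ := by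
        simpa [Real.norm_eq_abs] using
          norm_integral_le_integral_norm (fun x => g₁ x * f x - g₂ x * f x) (μ := ρ)
    _ ≤ ∫ x, |g₁ x - g₂ x| * K ∂ρ := by
        refine integral_mono_of_nonneg (Filter.Eventually.of_forall fun x => abs_nonneg _)
          ((ig₁.sub ig₂).abs.mul_const K) (Filter.Eventually.of_forall fun x => ?_)
        show |g₁ x * f x - g₂ x * f x| ≤ |g₁ x - g₂ x| * K
        have e : g₁ x * f x - g₂ x * f x = (g₁ x - g₂ x) * f x := by ring
        rw [e, abs_mul]
        exact mul_le_mul_of_nonneg_left (hbd x) (abs_nonneg _)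
    _ = (∫ x, |g₁ x - g₂ x| ∂ρ) * K := integral_mul_const K _
    _ ≤ (2 * tvDist μ ν) * K := mul_le_mul_of_nonneg_right key hK
    _ = 2 * K * tvDist μ ν := by ring
end B

section M
variable {β : Type*} [MeasurableSpace β]

lemma abs_toReal_sub_le_symmDiff (μ : Measure β) [IsProbabilityMeasure μ] (A t : Set β) :
    |(μ A).toReal - (μ t).toReal| ≤ (μ (A ∆ t)).toReal := by
  have key : ∀ s u : Set β, (μ s).toReal ≤ (μ u).toReal + (μ (s ∆ u)).toReal := by
    intro s u
    rw [← ENNReal.toReal_add (measure_ne_top μ u) (measure_ne_top μ _)]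
    refine ENNReal.toReal_mono (by finiteness) ?_
    refine le_trans (measure_mono ?_) (measure_union_le u (s ∆ u))
    intro x hx
    by_cases h : x ∈ u
    · exact Set.mem_union_left _ h
    · exact Set.mem_union_right _ (Or.inl ⟨hx, h⟩)
  rw [abs_sub_le_iff]
  constructor
  · have := key A t; linarith
  · have := key t A; rw [symmDiff_comm] at this; linarith

lemma exists_tv_seq [MeasurableSpace.CountablyGenerated β] :
    ∃ S : ℕ → Set β, (∀ n, MeasurableSet (S n)) ∧
      ∀ (μ ν : Measure β), IsProbabilityMeasure μ → IsProbabilityMeasure ν →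
        tvDist μ ν = ⨆ n, |(μ (S n)).toReal - (ν (S n)).toReal| := by
  classical
  set 𝒜 : Set (Set β) :=
    MeasureTheory.generateSetAlgebra (MeasurableSpace.countableGeneratingSet β) with h𝒜
  have halg : IsSetAlgebra 𝒜 := MeasureTheory.isSetAlgebra_generateSetAlgebra
  have hcount : 𝒜.Countable :=
    MeasureTheory.countable_generateSetAlgebra
      MeasurableSpace.countable_countableGeneratingSet
  have hgen : MeasurableSpace.generateFrom 𝒜 = ‹MeasurableSpace β› := by
    rw [h𝒜, MeasureTheory.generateFrom_generateSetAlgebra_eq,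
      MeasurableSpace.generateFrom_countableGeneratingSet]
  have hmeas : ∀ s ∈ 𝒜, MeasurableSet s := by
    intro s hs
    rw [← hgen]
    exact MeasurableSpace.measurableSet_generateFrom hs
  set S : ℕ → Set β := Set.enumerateCountable hcount ∅ with hS
  have hS_mem : ∀ n, S n ∈ 𝒜 := Set.enumerateCountable_mem hcount halg.empty_mem
  have hS_range : Set.range S = 𝒜 :=
    Set.range_enumerateCountable_of_mem hcount halg.empty_mem
  refine ⟨S, fun n => hmeas _ (hS_mem n), ?_⟩
  intro μ ν hμ hν
  have hb : BddAbove (Set.range fun n => |(μ (S n)).toReal - (ν (S n)).toReal|) := by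
    refine ⟨tvDist μ ν, ?_⟩
    rintro x ⟨n, rfl⟩
    exact abs_sub_le_tvDist μ ν (hmeas _ (hS_mem n))
  refine le_antisymm ?_ (Real.iSup_le (fun n => abs_sub_le_tvDist μ ν (hmeas _ (hS_mem n)))
    (tvDist_nonneg μ ν))
  have hnn : (0:ℝ) ≤ ⨆ n, |(μ (S n)).toReal - (ν (S n)).toReal| :=
    Real.iSup_nonneg fun _ => abs_nonneg _
  refine Real.iSup_le (fun A => Real.iSup_le (fun hA => ?_) hnn) hnn
  refine le_of_forall_pos_le_add fun ε hε => ?_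
  have hdense : (μ + ν).MeasureDense 𝒜 :=
    Measure.MeasureDense.of_generateFrom_isSetAlgebra_finite (μ + ν) halg hgen.symm
  obtain ⟨t, ht𝒜, hlt⟩ := hdense.approx A hA (measure_ne_top _ _) ε hε
  obtain ⟨n, hn⟩ : ∃ n, S n = t := by
    have : t ∈ Set.range S := hS_range ▸ ht𝒜
    exact this
  have herr : ((μ + ν) (A ∆ t)).toReal ≤ ε := by
    refine le_of_lt ?_
    rwa [← ENNReal.lt_ofReal_iff_toReal_lt (measure_ne_top _ _)]
  have hμerr := abs_toReal_sub_le_symmDiff μ A t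
  have hνerr := abs_toReal_sub_le_symmDiff ν A t
  have hsum : (μ (A ∆ t)).toReal + (ν (A ∆ t)).toReal = ((μ + ν) (A ∆ t)).toReal := by
    rw [Measure.add_apply, ENNReal.toReal_add (measure_ne_top _ _) (measure_ne_top _ _)]
  have htv : |(μ t).toReal - (ν t).toReal| ≤ ⨆ n, |(μ (S n)).toReal - (ν (S n)).toReal| := by
    have := le_ciSup hb n
    rwa [hn] at this
  have tri : |(μ A).toReal - (ν A).toReal| ≤
      |(μ t).toReal - (ν t).toReal| + (|(μ A).toReal - (μ t).toReal|
        + |(ν A).toReal - (ν t).toReal|) := by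
    have : (μ A).toReal - (ν A).toReal =
        ((μ t).toReal - (ν t).toReal) + (((μ A).toReal - (μ t).toReal)
          - ((ν A).toReal - (ν t).toReal)) := by ring
    rw [this]
    refine (abs_add_le _ _).trans ?_
    gcongr
    exact (abs_sub _ _)
  linarith


section A
variable {α β : Type*} [MeasurableSpace α] [MeasurableSpace β]
  [StandardBorelSpace β] [Nonempty β]

lemma measurable_tvDist_condKernel (μ : Measure (α × β)) [IsFiniteMeasure μ]
    (ν : Measure β) [IsProbabilityMeasure ν] :
    Measurable (fun x => tvDist (μ.condKernel x) ν) := by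
  obtain ⟨S, hSmeas, hStv⟩ := exists_tv_seq (β := β)
  have : (fun x => tvDist (μ.condKernel x) ν)
      = fun x => ⨆ n, |((μ.condKernel x) (S n)).toReal - (ν (S n)).toReal| := by
    funext x
    exact hStv _ _ inferInstance inferInstance
  rw [this]
  exact Measurable.iSup fun n =>
    ((μ.condKernel.measurable_coe (hSmeas n)).ennreal_toReal.sub measurable_const).abs

lemma abs_integral_le_of_abs_le {γ : Type*} [MeasurableSpace γ] (m : Measure γ)
    [IsProbabilityMeasure m] {f : γ → ℝ} {K : ℝ} (h : ∀ x, |f x| ≤ K) :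
    |∫ x, f x ∂m| ≤ K := by
  have := norm_integral_le_of_norm_le_const (μ := m) (f := f) (C := K)
    (Filter.Eventually.of_forall fun x => by simpa using h x)
  simpa [Real.norm_eq_abs] using this

lemma step_bound (μ : Measure (α × β)) [IsProbabilityMeasure μ]
    (ν : Measure β) [IsProbabilityMeasure ν]
    (g : α × β → ℝ) (hg : Measurable g) (K : ℝ) (hK : 0 ≤ K) (hbd : ∀ p, |g p| ≤ K)
    (b : ℝ) (hb : 0 ≤ b) (hmix : ∫ x, tvDist (μ.condKernel x) ν ∂μ.fst ≤ b) :
    |∫ p, g p ∂μ - ∫ x, ∫ y, g (x, y) ∂ν ∂μ.fst| ≤ 2 * K * b := by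
  have int_g : Integrable g μ :=
    (integrable_const K).mono' hg.aestronglyMeasurable
      (Filter.Eventually.of_forall fun p => by simpa using hbd p)
  have e₁ : ∫ p, g p ∂μ = ∫ x, ∫ y, g (x, y) ∂(μ.condKernel x) ∂μ.fst :=
    (Measure.integral_condKernel int_g).symm
  rw [e₁]
  set F₁ : α → ℝ := fun x => ∫ y, g (x, y) ∂(μ.condKernel x) with hF₁
  set F₂ : α → ℝ := fun x => ∫ y, g (x, y) ∂ν with hF₂
  have hbd₁ : ∀ x, |F₁ x| ≤ K := fun x =>
    abs_integral_le_of_abs_le _ (fun y => hbd (x, y))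
  have hbd₂ : ∀ x, |F₂ x| ≤ K := fun x =>
    abs_integral_le_of_abs_le _ (fun y => hbd (x, y))
  have hm₁ : AEStronglyMeasurable F₁ μ.fst :=
    hg.aestronglyMeasurable.integral_condKernel
  have hm₂ : Measurable F₂ := (hg.stronglyMeasurable.integral_prod_right').measurable
  have hi₁ : Integrable F₁ μ.fst :=
    (integrable_const K).mono' hm₁ (Filter.Eventually.of_forall fun x => by simpa using hbd₁ x)
  have hi₂ : Integrable F₂ μ.fst :=
    (integrable_const K).mono' hm₂.aestronglyMeasurable
      (Filter.Eventually.of_forall fun x => by simpa using hbd₂ x)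
  have htv_meas : Measurable (fun x => tvDist (μ.condKernel x) ν) :=
    measurable_tvDist_condKernel μ ν
  have htv_int : Integrable (fun x => 2 * K * tvDist (μ.condKernel x) ν) μ.fst := by
    refine (integrable_const (2 * K)).mono'
      ((htv_meas.const_mul (2 * K)).aestronglyMeasurable)
      (Filter.Eventually.of_forall fun x => ?_)
    rw [Real.norm_eq_abs, abs_of_nonneg (by have := tvDist_nonneg (μ.condKernel x) ν; positivity)]
    calc 2 * K * tvDist (μ.condKernel x) ν ≤ 2 * K * 1 := by
          have := tvDist_le_one (μ.condKernel x) ν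
          have := tvDist_nonneg (μ.condKernel x) ν
          nlinarith
      _ = 2 * K := by ring
  rw [← integral_sub hi₁ hi₂]
  calc |∫ x, (F₁ x - F₂ x) ∂μ.fst| ≤ ∫ x, |F₁ x - F₂ x| ∂μ.fst := by
        simpa [Real.norm_eq_abs] using
          norm_integral_le_integral_norm (fun x => F₁ x - F₂ x) (μ := μ.fst)
    _ ≤ ∫ x, 2 * K * tvDist (μ.condKernel x) ν ∂μ.fst := by
        refine integral_mono_of_nonneg (Filter.Eventually.of_forall fun x => abs_nonneg _)
          htv_int (Filter.Eventually.of_forall fun x => ?_)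
        show |F₁ x - F₂ x| ≤ 2 * K * tvDist (μ.condKernel x) ν
        exact abs_integral_sub_le_tvDist (μ.condKernel x) ν
          (hg.comp measurable_prodMk_left) hK (fun y => hbd (x, y))
    _ = 2 * K * ∫ x, tvDist (μ.condKernel x) ν ∂μ.fst := by
        rw [integral_const_mul]
    _ ≤ 2 * K * b := by
        have h2K : 0 ≤ 2 * K := by linarith
        exact mul_le_mul_of_nonneg_left hmix h2K
end A

lemma tv_integral_congr {α β : Type*} [MeasurableSpace α] [MeasurableSpace β]
    [StandardBorelSpace β] [Nonempty β] {ρ ρ' : Measure (α × β)} [IsFiniteMeasure ρ]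
    [IsFiniteMeasure ρ'] {νm νm' : Measure β} (hρ : ρ = ρ') (hν : νm = νm') :
    (∫ x, (⨆ (A : Set β) (_ : MeasurableSet A),
      |((ρ.condKernel x) A).toReal - (νm A).toReal|) ∂ρ.fst)
    = ∫ x, (⨆ (A : Set β) (_ : MeasurableSet A),
      |((ρ'.condKernel x) A).toReal - (νm' A).toReal|) ∂ρ'.fst := by
  subst hρ; subst hν; rfl

theorem yu_aux (k : ℕ) : ∀ (Ω : Fin (k + 1) → Type u)
    [∀ i, MeasurableSpace (Ω i)] [∀ i, StandardBorelSpace (Ω i)] [∀ i, Nonempty (Ω i)]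
    (Q : Measure (∀ i, Ω i)) [IsProbabilityMeasure Q],
    ∀ (h : (∀ i, Ω i) → ℝ), Measurable h → ∀ (K : ℝ), 0 ≤ K →
    (∀ ω, |h ω| ≤ K) → ∀ (β : ℝ), 0 ≤ β →
    (∀ (i : ℕ) (hi : i + 1 < k + 1),
      (∫ x, (⨆ (A : Set (Ω ⟨i + 1, hi⟩)) (_ : MeasurableSet A),
          |(((Q.map (fun ω =>
                (((fun j : Fin (i + 1) => ω (j.castLE (by omega))),
                  ω ⟨i + 1, hi⟩) :
                  ((j : Fin (i + 1)) → Ω (j.castLE (by omega))) × Ω ⟨i + 1, hi⟩))).condKernel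
              x) A).toReal
            - ((Q.map (fun ω => ω ⟨i + 1, hi⟩)) A).toReal|)
        ∂((Q.map (fun ω =>
            (((fun j : Fin (i + 1) => ω (j.castLE (by omega))),
              ω ⟨i + 1, hi⟩) :
              ((j : Fin (i + 1)) → Ω (j.castLE (by omega))) × Ω ⟨i + 1, hi⟩))).fst)) ≤ β) →
    |(∫ ω, h ω ∂Q) - ∫ ω, h ω ∂(Measure.pi (fun i => Q.map (fun ω => ω i)))|
      ≤ 2 * (k : ℝ) * K * β := by
  induction k with
  | zero =>
    intro Ω _ _ _ Q hQ h hmeas K hK hbd β hβ hmix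
    have hQP : Measure.pi (fun i => Q.map (fun ω => ω i)) = Q := by
      refine Measure.pi_eq fun s hs => ?_
      rw [Fin.prod_univ_one, Measure.map_apply (measurable_pi_apply 0) (hs 0)]
      congr 1
      ext ω
      simp only [Set.mem_univ_pi, Set.mem_preimage]
      constructor
      · intro hall; exact hall 0
      · intro h0 i
        have : i = 0 := Fin.ext (by have := i.isLt; omega)
        rw [this]; exact h0
    rw [hQP]
    simp
  | succ k ih =>
    intro Ω _ _ _ Q hQ h hmeas K hK hbd β hβ hmix
    have hle : k + 1 ≤ k + 2 := by omega
    have hlt : k + 1 < k + 2 := by omega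
    have hproj : Measurable (fun (ω : ∀ i, Ω i) (j : Fin (k+1)) => ω (j.castLE hle)) :=
      measurable_pi_lambda _ fun j => measurable_pi_apply _
    have msplit : Measurable (fun (ω : ∀ i, Ω i) =>
        (((fun j : Fin (k+1) => ω (j.castLE hle)), ω ⟨k+1, hlt⟩) :
          ((j : Fin (k+1)) → Ω (j.castLE hle)) × Ω ⟨k+1, hlt⟩)) :=
      hproj.prodMk (measurable_pi_apply _)
    set μ : Measure (((j : Fin (k+1)) → Ω (j.castLE hle)) × Ω ⟨k+1, hlt⟩) :=
      Q.map (fun ω => ((fun j : Fin (k+1) => ω (j.castLE hle)), ω ⟨k+1, hlt⟩)) with hμ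
    set ν : Measure (Ω ⟨k+1, hlt⟩) := Q.map (fun ω => ω ⟨k+1, hlt⟩) with hν
    have : IsProbabilityMeasure μ := Measure.isProbabilityMeasure_map msplit.aemeasurable
    have : IsProbabilityMeasure ν :=
      Measure.isProbabilityMeasure_map (measurable_pi_apply _).aemeasurable
    have : IsProbabilityMeasure (Q.map (fun ω (j : Fin (k+1)) => ω (j.castLE hle))) :=
      Measure.isProbabilityMeasure_map hproj.aemeasurable
    -- the inverse map
    set esymm : (((j : Fin (k+1)) → Ω (j.castLE hle)) × Ω ⟨k+1, hlt⟩) → (∀ i, Ω i) :=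
      fun p => Fin.snoc p.1 p.2 with hesymm
    have mesymm : Measurable esymm := by
      refine measurable_pi_lambda _ fun i => ?_
      refine Fin.lastCases ?_ ?_ i
      · have : ∀ p : (((j : Fin (k+1)) → Ω (j.castLE hle)) × Ω ⟨k+1, hlt⟩),
            esymm p (Fin.last (k+1)) = p.2 := fun p => Fin.snoc_last _ _
        simp only [this]
        exact measurable_snd
      · intro j
        have : ∀ p : (((j : Fin (k+1)) → Ω (j.castLE hle)) × Ω ⟨k+1, hlt⟩),
            esymm p (Fin.castSucc j) = p.1 j := fun p => Fin.snoc_castSucc _ _ _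
        simp only [this]
        exact (measurable_pi_apply j).comp measurable_fst
    have h_se : ∀ ω, esymm ((fun j : Fin (k+1) => ω (j.castLE hle)), ω ⟨k+1, hlt⟩) = ω := by
      intro ω
      funext i
      refine Fin.lastCases ?_ ?_ i
      · exact Fin.snoc_last _ _
      · intro j; exact Fin.snoc_castSucc _ _ j
    set g : (((j : Fin (k+1)) → Ω (j.castLE hle)) × Ω ⟨k+1, hlt⟩) → ℝ :=
      fun p => h (esymm p) with hgdef
    have hg : Measurable g := hmeas.comp mesymm
    have hgbd : ∀ p, |g p| ≤ K := fun p => hbd _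
    have hQint : ∫ p, g p ∂μ = ∫ ω, h ω ∂Q := by
      rw [hμ, integral_map msplit.aemeasurable hg.aestronglyMeasurable]
      simp only [hgdef, h_se]
    -- identify μ.fst
    have hfst : μ.fst = Q.map (fun ω (j : Fin (k+1)) => ω (j.castLE hle)) := by
      rw [hμ, Measure.fst, Measure.map_map measurable_fst msplit]
      rfl
    -- step 1
    have step1 : |∫ p, g p ∂μ - ∫ x, ∫ y, g (x, y) ∂ν ∂μ.fst| ≤ 2 * K * β :=
      step_bound μ ν g hg K hK hgbd β hβ (hmix k hlt)
    -- function G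
    set G : ((j : Fin (k+1)) → Ω (j.castLE hle)) → ℝ := fun x => ∫ y, g (x, y) ∂ν with hGdef
    have hGmeas : Measurable G := hg.stronglyMeasurable.integral_prod_right'.measurable
    have hGbd : ∀ x, |G x| ≤ K := fun x => abs_integral_le_of_abs_le _ fun y => hgbd (x, y)
    -- step 2 : induction hypothesis
    have hmix' : ∀ (i : ℕ) (hi : i + 1 < k + 1),
        (∫ x, (⨆ (A : Set (Ω ((⟨i + 1, hi⟩ : Fin (k+1)).castLE hle)))
            (_ : MeasurableSet A),
            |((((Q.map (fun ω (j : Fin (k+1)) => ω (j.castLE hle))).map (fun ω =>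
                  (((fun j : Fin (i + 1) => ω (j.castLE (by omega))),
                    ω ⟨i + 1, hi⟩) :
                    ((j : Fin (i + 1)) → Ω ((j.castLE (by omega) : Fin (k+1)).castLE hle))
                      × Ω ((⟨i + 1, hi⟩ : Fin (k+1)).castLE hle)))).condKernel
                x) A).toReal
              - (((Q.map (fun ω (j : Fin (k+1)) => ω (j.castLE hle))).map
                  (fun ω => ω ⟨i + 1, hi⟩)) A).toReal|)
          ∂(((Q.map (fun ω (j : Fin (k+1)) => ω (j.castLE hle))).map (fun ω =>
              (((fun j : Fin (i + 1) => ω (j.castLE (by omega))),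
                ω ⟨i + 1, hi⟩) :
                ((j : Fin (i + 1)) → Ω ((j.castLE (by omega) : Fin (k+1)).castLE hle))
                  × Ω ((⟨i + 1, hi⟩ : Fin (k+1)).castLE hle)))).fst)) ≤ β := by
      intro i hi
      have hi2 : i + 1 < k + 2 := by omega
      have minner : Measurable (fun (ω : (j : Fin (k+1)) → Ω (j.castLE hle)) =>
          (((fun j : Fin (i + 1) => ω (j.castLE (by omega))), ω ⟨i + 1, hi⟩) :
            ((j : Fin (i + 1)) → Ω ((j.castLE (by omega) : Fin (k+1)).castLE hle))
              × Ω ((⟨i + 1, hi⟩ : Fin (k+1)).castLE hle))) :=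
        (measurable_pi_lambda _ fun j => measurable_pi_apply _).prodMk (measurable_pi_apply _)
      have e1 : (Q.map (fun ω (j : Fin (k+1)) => ω (j.castLE hle))).map
          (fun ω => (((fun j : Fin (i + 1) => ω (j.castLE (by omega))), ω ⟨i + 1, hi⟩) :
            ((j : Fin (i + 1)) → Ω ((j.castLE (by omega) : Fin (k+1)).castLE hle))
              × Ω ((⟨i + 1, hi⟩ : Fin (k+1)).castLE hle)))
          = Q.map (fun ω =>
            (((fun j : Fin (i + 1) => ω (j.castLE (by omega))), ω ⟨i + 1, hi2⟩) :
              ((j : Fin (i + 1)) → Ω (j.castLE (by omega))) × Ω ⟨i + 1, hi2⟩)) := by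
        rw [Measure.map_map minner hproj]
        rfl
      have e2 : (Q.map (fun ω (j : Fin (k+1)) => ω (j.castLE hle))).map
          (fun ω => ω ⟨i + 1, hi⟩)
          = Q.map (fun ω => ω ⟨i + 1, hi2⟩) := by
        rw [Measure.map_map (measurable_pi_apply _) hproj]
        rfl
      exact (tv_integral_congr e1 e2).trans_le (hmix i hi2)
    have step2 := ih (fun j : Fin (k+1) => Ω (j.castLE hle))
      (Q.map (fun ω (j : Fin (k+1)) => ω (j.castLE hle))) G hGmeas K hK hGbd β hβ hmix'
    -- rewrite the product of marginals of Q' as marginals of Q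
    have hpi : (fun j : Fin (k+1) =>
        (Q.map (fun ω (j : Fin (k+1)) => ω (j.castLE hle))).map (fun x => x j))
        = fun j : Fin (k+1) => Q.map (fun ω => ω (j.castLE hle)) := by
      funext j
      rw [Measure.map_map (measurable_pi_apply j) hproj]
      rfl
    rw [hpi] at step2
    rw [← hfst] at step2
    haveI : ∀ j : Fin (k+1), IsProbabilityMeasure (Q.map (fun ω => ω (j.castLE hle))) :=
      fun j => Measure.isProbabilityMeasure_map (measurable_pi_apply _).aemeasurable
    -- decompose the product measure
    have hP_eq : Measure.pi (fun i : Fin (k+2) => Q.map (fun ω => ω i))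
        = ((Measure.pi (fun j : Fin (k+1) =>
            Q.map (fun ω => ω (j.castLE hle)))).prod ν).map esymm := by
      refine Measure.pi_eq fun s hs => ?_
      rw [Measure.map_apply mesymm (MeasurableSet.univ_pi hs)]
      have hpre : esymm ⁻¹' (Set.univ.pi s)
          = (Set.univ.pi fun j : Fin (k+1) => s (j.castLE hle)) ×ˢ s ⟨k+1, hlt⟩ := by
        ext p
        simp only [Set.mem_preimage, Set.mem_pi, Set.mem_univ, true_implies, Set.mem_prod]
        constructor
        · intro hp
          constructor
          · intro j
            have h1 := hp (Fin.castSucc j)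
            simp only [hesymm] at h1
            rwa [Fin.snoc_castSucc] at h1
          · have h1 := hp (Fin.last (k+1))
            simp only [hesymm] at h1
            rwa [Fin.snoc_last] at h1
        · rintro ⟨h1, h2⟩ i
          refine Fin.lastCases ?_ ?_ i
          · simp only [hesymm]
            rw [Fin.snoc_last]
            exact h2
          · intro j
            simp only [hesymm]
            rw [Fin.snoc_castSucc]
            exact h1 j
      rw [hpre, Measure.prod_prod, Measure.pi_pi]
      rw [Fin.prod_univ_castSucc (f := fun i : Fin (k+2) => (Q.map (fun ω => ω i)) (s i))]
      rfl
    -- integral over P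
    have intg : Integrable g ((Measure.pi (fun j : Fin (k+1) =>
        Q.map (fun ω => ω (j.castLE hle)))).prod ν) :=
      (integrable_const K).mono' hg.aestronglyMeasurable
        (Filter.Eventually.of_forall fun p => by simpa using hgbd p)
    have hPint : ∫ ω, h ω ∂(Measure.pi (fun i : Fin (k+2) => Q.map (fun ω => ω i)))
        = ∫ x, G x ∂(Measure.pi (fun j : Fin (k+1) => Q.map (fun ω => ω (j.castLE hle)))) := by
      rw [hP_eq, integral_map mesymm.aemeasurable hmeas.aestronglyMeasurable]
      rw [show (fun p => h (esymm p)) = g from rfl]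
      rw [MeasureTheory.integral_prod _ intg]
    rw [← hQint, hPint]
    calc |(∫ p, g p ∂μ) - ∫ x, G x ∂(Measure.pi (fun j : Fin (k+1) =>
            Q.map (fun ω => ω (j.castLE hle))))|
        ≤ |(∫ p, g p ∂μ) - ∫ x, G x ∂μ.fst|
          + |(∫ x, G x ∂μ.fst) - ∫ x, G x ∂(Measure.pi (fun j : Fin (k+1) =>
            Q.map (fun ω => ω (j.castLE hle))))| := abs_sub_le _ _ _
      _ ≤ 2 * K * β + 2 * (k : ℝ) * K * β := add_le_add step1 step2
      _ ≤ 2 * ((k + 1 : ℕ) : ℝ) * K * β := by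
          push_cast
          nlinarith [mul_nonneg hK hβ]

/-- Yu's lemma: if `Q` is a joint law on a finite product whose successive conditional
distributions are within total variation `β` (in expectation) of the marginals, then the
expectation of a bounded measurable `h` under `Q` and under the product of marginals `P`
differ by at most `2(m-1)Kβ`. -/
theorem yu_lemma (m : ℕ) (hm : 1 ≤ m) (Ω : Fin m → Type u)
    [∀ i, MeasurableSpace (Ω i)] [∀ i, StandardBorelSpace (Ω i)] [∀ i, Nonempty (Ω i)]
    (Q : Measure (∀ i, Ω i)) [IsProbabilityMeasure Q]
    (P : Measure (∀ i, Ω i)) (hP : P = Measure.pi (fun i => Q.map (fun ω => ω i)))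
    (h : (∀ i, Ω i) → ℝ) (hmeas : Measurable h) (K : ℝ) (hK : 0 ≤ K)
    (hbd : ∀ ω, |h ω| ≤ K) (β : ℝ) (hβ : 0 ≤ β)
    (hmix : ∀ (i : ℕ) (hi : i + 1 < m),
      (∫ x, (⨆ (A : Set (Ω ⟨i + 1, hi⟩)) (_ : MeasurableSet A),
          |(((Q.map (fun ω =>
                (((fun j : Fin (i + 1) => ω (j.castLE (by omega))),
                  ω ⟨i + 1, hi⟩) :
                  ((j : Fin (i + 1)) → Ω (j.castLE (by omega))) × Ω ⟨i + 1, hi⟩))).condKernel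
              x) A).toReal
            - ((Q.map (fun ω => ω ⟨i + 1, hi⟩)) A).toReal|)
        ∂((Q.map (fun ω =>
            (((fun j : Fin (i + 1) => ω (j.castLE (by omega))),
              ω ⟨i + 1, hi⟩) :
              ((j : Fin (i + 1)) → Ω (j.castLE (by omega))) × Ω ⟨i + 1, hi⟩))).fst)) ≤ β) :
    |(∫ ω, h ω ∂Q) - ∫ ω, h ω ∂P| ≤ 2 * ((m : ℝ) - 1) * K * β := by
  subst hP
  obtain ⟨k, rfl⟩ : ∃ k, m = k + 1 := ⟨m - 1, by omega⟩
  have hres := yu_aux k Ω Q h hmeas K hK hbd β hβ hmix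
  have hcast : 2 * (((k + 1 : ℕ) : ℝ) - 1) * K * β = 2 * (k : ℝ) * K * β := by
    push_cast; ring
  rw [hcast]
  exact hres
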